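/- For every A ∈ ℝ and every B > 0, there exists a unique y ∈ (0, F₁(1)) such that y - B·(G ∘ F₁⁻¹)(y) - A = 0. Consequently, for every n ∈ ℕ*, every T > 0, every y₀ ∈ (0, F₁(1)) and every function w : [0,T] → ℝ, the implicit Euler recurrence y₀ⁿ = y₀, y_{k+1}ⁿ = y_kⁿ + (T/n)·(G ∘ F₁⁻¹)(y_{k+1}ⁿ) + γθ^β (w_{t_{k+1}ⁿ} - w_{t_kⁿ}) with t_kⁿ := kT/n admits a unique solution, and y_kⁿ ∈ (0, F₁(1)) for every k = 0, …, n. -/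

import Mathlib

/- Fix β ∈ (0,1), θ > 0, μ ∈ (0,1), γ ∈ ℝ.
F₁(y) = ∫₀^y [v(1-v)]^{-β} dv is a strictly increasing bijection from [0,1]
onto [0,F₁(1)] with inverse F₁⁻¹ (realized via `Function.invFunOn`), and
G(y) := θ(μ-y)[y(1-y)]^{-β}.
STATEMENT 16: For every A ∈ ℝ and B > 0, there is a unique y ∈ (0,F₁(1)) with
y - B·(G∘F₁⁻¹)(y) - A = 0. Consequently, for every n ∈ ℕ*, T > 0,
y₀ ∈ (0,F₁(1)) and w : [0,T] → ℝ, the implicit Euler recurrence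
y₀ⁿ = y₀, y_{k+1}ⁿ = y_kⁿ + (T/n)(G∘F₁⁻¹)(y_{k+1}ⁿ) + γθ^β(w_{t_{k+1}ⁿ} - w_{t_kⁿ}),
t_kⁿ := kT/n, admits a unique solution, with y_kⁿ ∈ (0,F₁(1)) for k = 0,…,n. -/

noncomputable def F1 (β y : ℝ) : ℝ := ∫ v in (0:ℝ)..y, (v * (1 - v)) ^ (-β)

noncomputable def F1inv (β z : ℝ) : ℝ := Function.invFunOn (F1 β) (Set.Icc 0 1) z

noncomputable def G (β θ μ x : ℝ) : ℝ := θ * (μ - x) * (x * (1 - x)) ^ (-β)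

open Set MeasureTheory intervalIntegral Filter Topology

lemma two_pow_aux {β : ℝ} : ((1:ℝ)/2) ^ (-β) = (2:ℝ) ^ β := by
  rw [one_div, Real.inv_rpow (by norm_num), Real.rpow_neg (by norm_num), inv_inv]

lemma intble (β : ℝ) (hβ : β ∈ Set.Ioo (0:ℝ) 1) :
    IntervalIntegrable (fun v : ℝ => (v * (1 - v)) ^ (-β)) volume 0 1 := by
  have h1 : IntervalIntegrable (fun v : ℝ => (v * (1 - v)) ^ (-β)) volume 0 (1/2) := by
    have hg : IntervalIntegrable (fun v : ℝ => (2:ℝ) ^ β * v ^ (-β)) volume 0 (1/2) :=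
      (intervalIntegrable_rpow' (by linarith [hβ.2] : (-1:ℝ) < -β)).const_mul _
    have hmeas : AEStronglyMeasurable (fun v : ℝ => (v * (1 - v)) ^ (-β))
        (volume.restrict (Set.uIoc (0:ℝ) (1/2))) := by
      rw [uIoc_of_le (by norm_num : (0:ℝ) ≤ 1/2)]
      refine ContinuousOn.aestronglyMeasurable ?_ measurableSet_Ioc
      refine ContinuousOn.rpow_const (by fun_prop) ?_
      intro x hx
      exact Or.inl (by nlinarith [hx.1, hx.2] : x * (1 - x) ≠ 0)
    refine hg.mono_fun' hmeas ?_
    filter_upwards [ae_restrict_mem measurableSet_uIoc] with v hv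
    rw [uIoc_of_le (by norm_num : (0:ℝ) ≤ 1/2)] at hv
    obtain ⟨hv0, hv2⟩ := hv
    have h1v : (0:ℝ) < 1 - v := by linarith
    rw [Real.norm_eq_abs, abs_of_nonneg (Real.rpow_nonneg (by nlinarith) _),
      Real.mul_rpow hv0.le h1v.le, mul_comm ((2:ℝ)^β)]
    have hle : (1 - v) ^ (-β) ≤ (2:ℝ) ^ β := by
      rw [← two_pow_aux]
      exact Real.rpow_le_rpow_of_nonpos (by norm_num) (by linarith) (by linarith [hβ.1])
    exact mul_le_mul_of_nonneg_left hle (Real.rpow_nonneg hv0.le _)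
  have h2 : IntervalIntegrable (fun v : ℝ => (v * (1 - v)) ^ (-β)) volume (1/2) 1 := by
    have hg0 : IntervalIntegrable (fun v : ℝ => v ^ (-β)) volume 0 (1/2) :=
      intervalIntegrable_rpow' (by linarith [hβ.2])
    have hg1 : IntervalIntegrable (fun v : ℝ => (1 - v) ^ (-β)) volume (1 - 0) (1 - (1/2)) :=
      hg0.comp_sub_left 1
    norm_num at hg1
    have hg : IntervalIntegrable (fun v : ℝ => (2:ℝ) ^ β * (1 - v) ^ (-β)) volume (1/2) 1 :=
      (hg1.symm).const_mul _
    have hrestr : volume.restrict (Set.uIoc ((1:ℝ)/2) 1) = volume.restrict (Ioo (1/2) 1) := by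
      rw [uIoc_of_le (by norm_num : (1:ℝ)/2 ≤ 1)]
      exact (Measure.restrict_congr_set Ioo_ae_eq_Ioc).symm
    have hmeas : AEStronglyMeasurable (fun v : ℝ => (v * (1 - v)) ^ (-β))
        (volume.restrict (Set.uIoc ((1:ℝ)/2) 1)) := by
      rw [hrestr]
      refine ContinuousOn.aestronglyMeasurable ?_ measurableSet_Ioo
      refine ContinuousOn.rpow_const (by fun_prop) ?_
      intro x hx
      exact Or.inl (by nlinarith [hx.1, hx.2] : x * (1 - x) ≠ 0)
    refine hg.mono_fun' hmeas ?_
    filter_upwards [ae_restrict_mem measurableSet_uIoc] with v hv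
    rw [uIoc_of_le (by norm_num : (1:ℝ)/2 ≤ 1)] at hv
    obtain ⟨hv0, hv2⟩ := hv
    have hv0' : (0:ℝ) < v := by linarith
    have h1v : (0:ℝ) ≤ 1 - v := by linarith
    rw [Real.norm_eq_abs, abs_of_nonneg (Real.rpow_nonneg (by nlinarith) _),
      Real.mul_rpow hv0'.le h1v]
    have hle : v ^ (-β) ≤ (2:ℝ) ^ β := by
      rw [← two_pow_aux]
      exact Real.rpow_le_rpow_of_nonpos (by norm_num) hv0.le (by linarith [hβ.1])
    exact mul_le_mul_of_nonneg_right hle (Real.rpow_nonneg h1v _)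
  exact h1.trans h2

lemma intble' (β : ℝ) (hβ : β ∈ Set.Ioo (0:ℝ) 1) {a b : ℝ} (ha : a ∈ Set.Icc (0:ℝ) 1)
    (hb : b ∈ Set.Icc (0:ℝ) 1) :
    IntervalIntegrable (fun v : ℝ => (v * (1 - v)) ^ (-β)) volume a b := by
  refine (intble β hβ).mono_set' ?_
  rw [uIoc_of_le (by norm_num : (0:ℝ) ≤ 1)]
  intro x hx
  rcases le_or_gt a b with h | h
  · rw [uIoc_of_le h] at hx; exact ⟨lt_of_le_of_lt ha.1 hx.1, le_trans hx.2 hb.2⟩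
  · rw [uIoc_of_ge h.le] at hx; exact ⟨lt_of_le_of_lt hb.1 hx.1, le_trans hx.2 ha.2⟩

lemma F1_strictMonoOn (β : ℝ) (hβ : β ∈ Set.Ioo (0:ℝ) 1) :
    StrictMonoOn (F1 β) (Set.Icc 0 1) := by
  intro a ha b hb hab
  have key : F1 β a + ∫ v in a..b, (v * (1 - v)) ^ (-β) = F1 β b :=
    integral_add_adjacent_intervals (intble' β hβ (by norm_num) ha) (intble' β hβ ha hb)
  have hpos : 0 < ∫ v in a..b, (v * (1 - v)) ^ (-β) := by
    refine intervalIntegral_pos_of_pos_on (intble' β hβ ha hb) ?_ hab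
    intro x hx
    have h0 : 0 < x := lt_of_le_of_lt ha.1 hx.1
    have h1 : x < 1 := lt_of_lt_of_le hx.2 hb.2
    exact Real.rpow_pos_of_pos (by nlinarith) _
  linarith

lemma F1_contOn (β : ℝ) (hβ : β ∈ Set.Ioo (0:ℝ) 1) :
    ContinuousOn (F1 β) (Set.Icc 0 1) := by
  have := continuousOn_primitive_interval' (μ := volume) (intble β hβ)
    (a := 0) (by rw [uIcc_of_le (by norm_num : (0:ℝ) ≤ 1)]; norm_num)
  rwa [uIcc_of_le (by norm_num : (0:ℝ) ≤ 1)] at this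

lemma F1_zero (β : ℝ) : F1 β 0 = 0 := integral_same

lemma G_strictAntiOn (β θ μ : ℝ) (hβ : β ∈ Set.Ioo (0:ℝ) 1) (hθ : 0 < θ)
    (hμ : μ ∈ Set.Ioo (0:ℝ) 1) : StrictAntiOn (G β θ μ) (Set.Ioo 0 1) := by
  have hcont : ContinuousOn (G β θ μ) (Set.Ioo 0 1) := by
    refine ContinuousOn.mul (by fun_prop) ?_
    refine ContinuousOn.rpow_const (by fun_prop) ?_
    intro x hx
    exact Or.inl (by nlinarith [hx.1, hx.2] : x * (1 - x) ≠ 0)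
  refine strictAntiOn_of_deriv_neg (convex_Ioo 0 1) hcont ?_
  rw [interior_Ioo]
  intro x hx
  obtain ⟨hx0, hx1⟩ := hx
  have hu : (0:ℝ) < x * (1 - x) := by nlinarith
  have hder : HasDerivAt (G β θ μ)
      (θ * (0 - 1) * (x * (1 - x)) ^ (-β)
        + θ * (μ - x) * ((-β) * (x * (1 - x)) ^ (-β - 1) * (1 - 2 * x))) x := by
    have h1 : HasDerivAt (fun x : ℝ => x * (1 - x)) (1 - 2 * x) x := by
      have := (hasDerivAt_id x).mul ((hasDerivAt_const x 1).sub (hasDerivAt_id x))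
      exact this.congr_deriv (by simp; ring)
    have h2 : HasDerivAt (fun y : ℝ => y ^ (-β)) ((-β) * (x * (1 - x)) ^ (-β - 1))
        (x * (1 - x)) := Real.hasDerivAt_rpow_const (Or.inl hu.ne')
    have h3 : HasDerivAt (fun x : ℝ => (x * (1 - x)) ^ (-β))
        ((-β) * (x * (1 - x)) ^ (-β - 1) * (1 - 2 * x)) x := h2.comp (h := fun x : ℝ => x * (1 - x)) x h1
    have h4 : HasDerivAt (fun x : ℝ => θ * (μ - x)) (θ * (0 - 1)) x := by
      have := (hasDerivAt_const x θ).mul ((hasDerivAt_const x μ).sub (hasDerivAt_id x))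
      exact this.congr_deriv (by simp)
    exact h4.mul h3
  rw [hder.deriv]
  have hrw : (x * (1 - x)) ^ (-β) = (x * (1 - x)) ^ (-β - 1) * (x * (1 - x)) := by
    rw [show -β = -β - 1 + 1 by ring, Real.rpow_add hu, Real.rpow_one]; ring_nf
  rw [hrw]
  have hkey : 0 < x * (1 - x) + β * (μ - x) * (1 - 2 * x) := by
    nlinarith [sq_nonneg (x - μ), mul_pos hμ.1 (by linarith [hμ.2] : (0:ℝ) < 1 - μ),
      mul_pos (mul_pos hx0 (by linarith : (0:ℝ) < 1 - x)) (by linarith [hβ.2] : (0:ℝ) < 1 - β),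
      hβ.1]
  have hpow : 0 < (x * (1 - x)) ^ (-β - 1) := Real.rpow_pos_of_pos hu _
  nlinarith [mul_pos (mul_pos hθ hpow) hkey]

lemma G_tendsto_zero (β θ μ : ℝ) (hβ : β ∈ Set.Ioo (0:ℝ) 1) (hθ : 0 < θ)
    (hμ : μ ∈ Set.Ioo (0:ℝ) 1) : Tendsto (G β θ μ) (𝓝[>] (0:ℝ)) atTop := by
  have t1 : Tendsto (fun x : ℝ => x * (1 - x)) (𝓝[>] (0:ℝ)) (𝓝[>] (0:ℝ)) := by
    refine tendsto_nhdsWithin_of_tendsto_nhds_of_eventually_within _ ?_ ?_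
    · have : Tendsto (fun x : ℝ => x * (1 - x)) (𝓝 (0:ℝ)) (𝓝 ((0:ℝ) * (1 - 0))) :=
        (Continuous.tendsto (by fun_prop) 0)
      simpa using this.mono_left nhdsWithin_le_nhds
    · filter_upwards [Ioo_mem_nhdsGT_of_mem (by constructor <;> norm_num :
        (0:ℝ) ∈ Ico 0 1)] with x hx
      exact mem_Ioi.mpr (by nlinarith [hx.1, hx.2])
  have t2 : Tendsto (fun y : ℝ => y ^ (-β)) (𝓝[>] (0:ℝ)) atTop := by
    have h1 : Tendsto (fun y : ℝ => y ^ β) (𝓝[>] (0:ℝ)) (𝓝[>] (0:ℝ)) := by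
      refine tendsto_nhdsWithin_of_tendsto_nhds_of_eventually_within _ ?_ ?_
      · have hc : ContinuousAt (fun y : ℝ => y ^ β) 0 :=
          Real.continuousAt_rpow_const 0 β (Or.inr hβ.1.le)
        have := hc.tendsto.mono_left (nhdsWithin_le_nhds (s := Set.Ioi (0:ℝ)))
        simpa [Real.zero_rpow (ne_of_gt hβ.1)] using this
      · filter_upwards [self_mem_nhdsWithin] with y hy
        exact mem_Ioi.mpr (Real.rpow_pos_of_pos hy _)
    have h2 := h1.inv_tendsto_nhdsGT_zero
    refine h2.congr' ?_
    filter_upwards [self_mem_nhdsWithin] with y hy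
    simp [Real.rpow_neg (le_of_lt hy)]
  have t3 : Tendsto (fun x : ℝ => θ * (μ - x)) (𝓝[>] (0:ℝ)) (𝓝 (θ * μ)) := by
    have : Tendsto (fun x : ℝ => θ * (μ - x)) (𝓝 (0:ℝ)) (𝓝 (θ * (μ - 0))) :=
      Continuous.tendsto (by fun_prop) 0
    simpa using this.mono_left nhdsWithin_le_nhds
  exact t3.pos_mul_atTop (mul_pos hθ hμ.1) (t2.comp t1)

lemma G_tendsto_one (β θ μ : ℝ) (hβ : β ∈ Set.Ioo (0:ℝ) 1) (hθ : 0 < θ)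
    (hμ : μ ∈ Set.Ioo (0:ℝ) 1) : Tendsto (G β θ μ) (𝓝[<] (1:ℝ)) atBot := by
  have t1 : Tendsto (fun x : ℝ => x * (1 - x)) (𝓝[<] (1:ℝ)) (𝓝[>] (0:ℝ)) := by
    refine tendsto_nhdsWithin_of_tendsto_nhds_of_eventually_within _ ?_ ?_
    · have : Tendsto (fun x : ℝ => x * (1 - x)) (𝓝 (1:ℝ)) (𝓝 ((1:ℝ) * (1 - 1))) :=
        (Continuous.tendsto (by fun_prop) 1)
      simpa using this.mono_left nhdsWithin_le_nhds
    · filter_upwards [Ioo_mem_nhdsLT_of_mem (by constructor <;> norm_num :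
        (1:ℝ) ∈ Ioc 0 1)] with x hx
      exact mem_Ioi.mpr (by nlinarith [hx.1, hx.2])
  have t2 : Tendsto (fun y : ℝ => y ^ (-β)) (𝓝[>] (0:ℝ)) atTop := by
    have h1 : Tendsto (fun y : ℝ => y ^ β) (𝓝[>] (0:ℝ)) (𝓝[>] (0:ℝ)) := by
      refine tendsto_nhdsWithin_of_tendsto_nhds_of_eventually_within _ ?_ ?_
      · have hc : ContinuousAt (fun y : ℝ => y ^ β) 0 :=
          Real.continuousAt_rpow_const 0 β (Or.inr hβ.1.le)
        have := hc.tendsto.mono_left (nhdsWithin_le_nhds (s := Set.Ioi (0:ℝ)))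
        simpa [Real.zero_rpow (ne_of_gt hβ.1)] using this
      · filter_upwards [self_mem_nhdsWithin] with y hy
        exact mem_Ioi.mpr (Real.rpow_pos_of_pos hy _)
    have h2 := h1.inv_tendsto_nhdsGT_zero
    refine h2.congr' ?_
    filter_upwards [self_mem_nhdsWithin] with y hy
    simp [Real.rpow_neg (le_of_lt hy)]
  have t3 : Tendsto (fun x : ℝ => θ * (μ - x)) (𝓝[<] (1:ℝ)) (𝓝 (θ * (μ - 1))) := by
    have : Tendsto (fun x : ℝ => θ * (μ - x)) (𝓝 (1:ℝ)) (𝓝 (θ * (μ - 1))) :=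
      Continuous.tendsto (by fun_prop) 1
    exact this.mono_left nhdsWithin_le_nhds
  exact t3.neg_mul_atTop (by nlinarith [hμ.2] : θ * (μ - 1) < 0) (t2.comp t1)

lemma part1 (β θ μ : ℝ) (hβ : β ∈ Set.Ioo (0:ℝ) 1) (hθ : 0 < θ)
    (hμ : μ ∈ Set.Ioo (0:ℝ) 1) (A B : ℝ) (hB : 0 < B) :
    ∃! y : ℝ, y ∈ Set.Ioo 0 (F1 β 1) ∧ y - B * G β θ μ (F1inv β y) - A = 0 := by
  have hsm := F1_strictMonoOn β hβ
  have hcont := F1_contOn β hβ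
  have hGa := G_strictAntiOn β θ μ hβ hθ hμ
  set Φ : ℝ → ℝ := fun x => F1 β x - B * G β θ μ x - A with hΦ
  have hΦmono : StrictMonoOn Φ (Set.Ioo 0 1) := by
    intro u hu v hv huv
    have h1 : F1 β u < F1 β v := hsm (Ioo_subset_Icc_self hu) (Ioo_subset_Icc_self hv) huv
    have h2 : G β θ μ v < G β θ μ u := hGa hu hv huv
    have := mul_lt_mul_of_pos_left h2 hB
    simp only [hΦ]; linarith
  -- find a with Φ a < 0
  obtain ⟨a, ha01, haΦ⟩ : ∃ a, a ∈ Set.Ioo (0:ℝ) 1 ∧ Φ a < 0 := by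
    have h1 := (G_tendsto_zero β θ μ hβ hθ hμ).eventually_gt_atTop ((F1 β 1 - A) / B)
    have h2 : Set.Ioo (0:ℝ) 1 ∈ 𝓝[>] (0:ℝ) :=
      Ioo_mem_nhdsGT_of_mem (by constructor <;> norm_num)
    obtain ⟨a, hGa', ha01⟩ := (h1.and h2).exists
    refine ⟨a, ha01, ?_⟩
    have hle : F1 β a ≤ F1 β 1 :=
      (hsm (Ioo_subset_Icc_self ha01) (by norm_num) ha01.2).le
    have : F1 β 1 - A < B * G β θ μ a := by
      rw [div_lt_iff₀ hB] at hGa'; linarith [hGa']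
    simp only [hΦ]; linarith
  -- find b with Φ b > 0
  obtain ⟨b, hb01, hbΦ⟩ : ∃ b, b ∈ Set.Ioo (0:ℝ) 1 ∧ 0 < Φ b := by
    have h1 := (G_tendsto_one β θ μ hβ hθ hμ).eventually_lt_atBot ((0 - A) / B)
    have h2 : Set.Ioo (0:ℝ) 1 ∈ 𝓝[<] (1:ℝ) :=
      Ioo_mem_nhdsLT_of_mem (by constructor <;> norm_num)
    obtain ⟨b, hGb', hb01⟩ := (h1.and h2).exists
    refine ⟨b, hb01, ?_⟩
    have hle : F1 β 0 ≤ F1 β b :=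
      (hsm (by norm_num) (Ioo_subset_Icc_self hb01) hb01.1).le
    rw [F1_zero] at hle
    have : B * G β θ μ b < 0 - A := by
      rw [lt_div_iff₀ hB] at hGb'; linarith [hGb']
    simp only [hΦ]; linarith
  have hab : a < b := by
    by_contra h
    push_neg at h
    rcases eq_or_lt_of_le h with h | h
    · rw [h] at hbΦ; linarith
    · have := hΦmono hb01 ha01 h; linarith
  have hΦcont : ContinuousOn Φ (Set.Icc a b) := by
    have hsub : Set.Icc a b ⊆ Set.Ioo (0:ℝ) 1 :=
      fun x hx => ⟨lt_of_lt_of_le ha01.1 hx.1, lt_of_le_of_lt hx.2 hb01.2⟩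
    have hGcont : ContinuousOn (G β θ μ) (Set.Ioo 0 1) := by
      refine ContinuousOn.mul (by fun_prop) ?_
      refine ContinuousOn.rpow_const (by fun_prop) ?_
      intro x hx
      exact Or.inl (by nlinarith [hx.1, hx.2] : x * (1 - x) ≠ 0)
    refine ContinuousOn.sub (ContinuousOn.sub ?_ ?_) continuousOn_const
    · exact hcont.mono (fun x hx => ⟨le_trans ha01.1.le hx.1, le_trans hx.2 hb01.2.le⟩)
    · exact (continuousOn_const.mul (hGcont.mono hsub))
  obtain ⟨x, hxab, hxΦ⟩ := intermediate_value_Ioo hab.le hΦcont ⟨haΦ, hbΦ⟩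
  have hx01 : x ∈ Set.Ioo (0:ℝ) 1 := ⟨lt_trans ha01.1 hxab.1, lt_trans hxab.2 hb01.2⟩
  have hxIcc : x ∈ Set.Icc (0:ℝ) 1 := Ioo_subset_Icc_self hx01
  have hinv : F1inv β (F1 β x) = x := hsm.injOn.leftInvOn_invFunOn hxIcc
  refine ⟨F1 β x, ⟨⟨?_, ?_⟩, ?_⟩, ?_⟩
  · rw [← F1_zero β]; exact hsm (by norm_num) hxIcc hx01.1
  · exact hsm hxIcc (by norm_num) hx01.2
  · rw [hinv]; exact hxΦ
  · rintro y' ⟨hy', heq'⟩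
    -- y' = F1 β x' for some x'
    have hy'mem : y' ∈ Set.Icc (F1 β 0) (F1 β 1) := by
      rw [F1_zero]; exact ⟨hy'.1.le, hy'.2.le⟩
    have := intermediate_value_Icc (by norm_num : (0:ℝ) ≤ 1) hcont hy'mem
    set x'' := F1inv β y' with hx''
    have hx''mem : x'' ∈ Set.Icc (0:ℝ) 1 := Function.invFunOn_mem (by
      obtain ⟨c, hc, hc'⟩ := this; exact ⟨c, hc, hc'⟩)
    have hx''eq : F1 β x'' = y' := Function.invFunOn_eq (by
      obtain ⟨c, hc, hc'⟩ := this; exact ⟨c, hc, hc'⟩)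
    have hx''Ioo : x'' ∈ Set.Ioo (0:ℝ) 1 := by
      constructor
      · rcases eq_or_lt_of_le hx''mem.1 with h | h
        · exfalso; rw [← h, F1_zero] at hx''eq; linarith [hy'.1, hx''eq]
        · exact h
      · rcases eq_or_lt_of_le hx''mem.2 with h | h
        · exfalso; rw [h] at hx''eq; linarith [hy'.2, hx''eq]
        · exact h
    have hΦx'' : Φ x'' = 0 := by
      simp only [hΦ, hx''eq]
      simpa [hx''] using heq'
    have : x'' = x := hΦmono.injOn hx''Ioo hx01 (by rw [hΦx'', hxΦ])
    rw [← hx''eq, this]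

theorem stmt16 (β θ μ γ : ℝ) (hβ : β ∈ Set.Ioo (0:ℝ) 1) (hθ : 0 < θ)
    (hμ : μ ∈ Set.Ioo (0:ℝ) 1) :
    (∀ A : ℝ, ∀ B : ℝ, 0 < B →
      ∃! y : ℝ, y ∈ Set.Ioo 0 (F1 β 1) ∧ y - B * G β θ μ (F1inv β y) - A = 0) ∧
    (∀ n : ℕ, 0 < n → ∀ T : ℝ, 0 < T → ∀ y₀ ∈ Set.Ioo 0 (F1 β 1), ∀ w : ℝ → ℝ,
      ∃ Y : ℕ → ℝ,
        (Y 0 = y₀ ∧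
         (∀ k < n, Y (k + 1) = Y k + (T / n) * G β θ μ (F1inv β (Y (k + 1))) +
            γ * θ ^ β * (w (((k : ℝ) + 1) * T / n) - w ((k : ℝ) * T / n))) ∧
         (∀ k ≤ n, Y k ∈ Set.Ioo 0 (F1 β 1))) ∧
        ∀ Y' : ℕ → ℝ,
          (Y' 0 = y₀ ∧
           (∀ k < n, Y' (k + 1) = Y' k + (T / n) * G β θ μ (F1inv β (Y' (k + 1))) +
              γ * θ ^ β * (w (((k : ℝ) + 1) * T / n) - w ((k : ℝ) * T / n))) ∧
           (∀ k ≤ n, Y' k ∈ Set.Ioo 0 (F1 β 1))) →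
          ∀ k ≤ n, Y' k = Y k) := by
  constructor
  · exact fun A B hB => part1 β θ μ hβ hθ hμ A B hB
  · intro n hn T hT y₀ hy₀ w
    have hnR : (0:ℝ) < (n:ℝ) := by exact_mod_cast hn
    have hB : (0:ℝ) < T / (n:ℝ) := div_pos hT hnR
    set noise : ℕ → ℝ := fun k => γ * θ ^ β * (w (((k : ℝ) + 1) * T / n) - w ((k : ℝ) * T / n))
      with hnoise
    have key : ∀ a : ℝ, ∃! y : ℝ,
        y ∈ Set.Ioo 0 (F1 β 1) ∧ y - (T / (n:ℝ)) * G β θ μ (F1inv β y) - a = 0 :=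
      fun a => part1 β θ μ hβ hθ hμ a (T / (n:ℝ)) hB
    set Y : ℕ → ℝ := fun k => Nat.rec y₀ (fun k yk => (key (yk + noise k)).choose) k with hY
    have hY0 : Y 0 = y₀ := rfl
    have hYs : ∀ k : ℕ, Y (k + 1) = (key (Y k + noise k)).choose := fun k => rfl
    have hspec : ∀ k : ℕ, Y (k + 1) ∈ Set.Ioo 0 (F1 β 1) ∧
        Y (k + 1) - (T / (n:ℝ)) * G β θ μ (F1inv β (Y (k + 1))) - (Y k + noise k) = 0 := by
      intro k
      rw [hYs k]
      exact (key (Y k + noise k)).choose_spec.1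
    have hmemY : ∀ k : ℕ, Y k ∈ Set.Ioo 0 (F1 β 1) := by
      intro k
      cases k with
      | zero => exact hy₀
      | succ k => exact (hspec k).1
    refine ⟨Y, ⟨hY0, ?_, fun k _ => hmemY k⟩, ?_⟩
    · intro k _
      have := (hspec k).2
      simp only [hnoise] at this
      linarith
    · rintro Y' ⟨hY'0, hY'rec, hY'mem⟩
      intro k
      induction k with
      | zero => intro _; rw [hY'0, hY0]
      | succ k ih =>
        intro hk
        have hkn : k < n := Nat.lt_of_succ_le hk
        have hYk : Y' k = Y k := ih (Nat.le_of_lt hkn)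
        have h1 : Y' (k + 1) ∈ Set.Ioo 0 (F1 β 1) ∧
            Y' (k + 1) - (T / (n:ℝ)) * G β θ μ (F1inv β (Y' (k + 1))) - (Y k + noise k) = 0 := by
          refine ⟨hY'mem (k + 1) hk, ?_⟩
          have := hY'rec k hkn
          rw [hYk] at this
          simp only [hnoise]
          linarith
        have h2 : Y (k + 1) ∈ Set.Ioo 0 (F1 β 1) ∧
            Y (k + 1) - (T / (n:ℝ)) * G β θ μ (F1inv β (Y (k + 1))) - (Y k + noise k) = 0 :=
          hspec k
        exact (key (Y k + noise k)).unique h1 h2
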